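/- Let μ be a partition, let R be the weight of one of its removable corners, let ν be μ with that corner removed, and let c_R = (qt·R/M)·∏_{A}(1 − A/(qt·R)) / ∏_{R'≠R}(1 − R'/R), the products running over the weights A of all addable corners of μ and over the weights R' of the removable corners of μ other than R. Then in ℚ(q,t): c_R = R·(1 − 1/(qt·R))/(1 − 1/(qt)) · ∏_{c∈ν} [(1 − w(c)/(q·R))·(1 − w(c)/(t·R))] / [(1 − w(c)/R)·(1 − w(c)/(qt·R))]. (This product over the cells of ν is the corner-formula form of the factor Ω[(M/qt)·B_ν/R] appearing in the standard-tableau expansions.) -/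

import Mathlib

open scoped Classical
open PowerSeries

noncomputable section

abbrev K := FractionRing (MvPolynomial (Fin 2) ℚ)

def q : K := algebraMap (MvPolynomial (Fin 2) ℚ) K (MvPolynomial.X 0)
def t : K := algebraMap (MvPolynomial (Fin 2) ℚ) K (MvPolynomial.X 1)

/-- the weight of a cell `(i,j)` (row `i`, column `j`) is `t^i * q^j` -/
def w (c : ℕ × ℕ) : K := t ^ c.1 * q ^ c.2

/-- `B_μ = Σ_{c ∈ μ} w(c)` -/
def Bsum (μ : YoungDiagram) : K := ∑ c ∈ μ.cells, w c

/-- a removable corner: a cell of `μ` whose removal leaves a Young diagram -/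
def IsRemovable (μ : YoungDiagram) (c : ℕ × ℕ) : Prop :=
  c ∈ μ ∧ IsLowerSet (↑(μ.cells.erase c) : Set (ℕ × ℕ))

/-- an addable corner: a cell not in `μ` whose addition gives a Young diagram -/
def IsAddable (μ : YoungDiagram) (c : ℕ × ℕ) : Prop :=
  c ∉ μ ∧ IsLowerSet (↑(insert c μ.cells) : Set (ℕ × ℕ))

/-- the arm of a cell: number of cells of `μ` strictly east of it in its row -/
def arm (μ : YoungDiagram) (c : ℕ × ℕ) : ℕ :=
  (μ.cells.filter fun d => d.1 = c.1 ∧ c.2 < d.2).card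

/-- the leg of a cell: number of cells of `μ` strictly north of it in its column -/
def leg (μ : YoungDiagram) (c : ℕ × ℕ) : ℕ :=
  (μ.cells.filter fun d => d.2 = c.2 ∧ c.1 < d.1).card



-- ===== auxiliary lemmas =====

lemma algMap_inj : Function.Injective (algebraMap (MvPolynomial (Fin 2) ℚ) K) :=
  IsFractionRing.injective _ _

lemma q_ne_zero : q ≠ 0 := by
  intro h
  exact MvPolynomial.X_ne_zero 0 (algMap_inj (by simpa [q] using h))

lemma t_ne_zero : t ≠ 0 := by
  intro h
  exact MvPolynomial.X_ne_zero 1 (algMap_inj (by simpa [t] using h))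

lemma w_eq_alg (c : ℕ × ℕ) :
    w c = algebraMap (MvPolynomial (Fin 2) ℚ) K (MvPolynomial.X 1 ^ c.1 * MvPolynomial.X 0 ^ c.2) := by
  simp [w, q, t, map_mul, map_pow]

lemma w_inj : Function.Injective w := by
  intro a b hab
  rw [w_eq_alg, w_eq_alg] at hab
  have h := algMap_inj hab
  rw [MvPolynomial.X_pow_eq_monomial (R := ℚ) (n := (1 : Fin 2)) (e := a.1),
    MvPolynomial.X_pow_eq_monomial (R := ℚ) (n := (0 : Fin 2)) (e := a.2),
    MvPolynomial.X_pow_eq_monomial (R := ℚ) (n := (1 : Fin 2)) (e := b.1),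
    MvPolynomial.X_pow_eq_monomial (R := ℚ) (n := (0 : Fin 2)) (e := b.2),
    MvPolynomial.monomial_mul, MvPolynomial.monomial_mul,
    MvPolynomial.monomial_eq_monomial_iff] at h
  rcases h with ⟨h1, -⟩ | ⟨h, -⟩
  · have h1a := DFunLike.congr_fun h1 1
    have h1b := DFunLike.congr_fun h1 0
    simp [Finsupp.single_apply] at h1a h1b
    exact Prod.ext h1a h1b
  · simp at h

lemma w_ne_zero (c : ℕ × ℕ) : w c ≠ 0 :=
  mul_ne_zero (pow_ne_zero _ t_ne_zero) (pow_ne_zero _ q_ne_zero)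

lemma removable_iff (μ : YoungDiagram) (i j : ℕ) :
    IsRemovable μ (i, j) ↔ (i, j) ∈ μ ∧ (i + 1, j) ∉ μ ∧ (i, j + 1) ∉ μ := by
  constructor
  · rintro ⟨hm, hl⟩
    refine ⟨hm, ?_, ?_⟩
    · intro hc
      have h1 : (i + 1, j) ∈ (↑(μ.cells.erase (i, j)) : Set (ℕ × ℕ)) := by
        simp only [Finset.coe_erase, Set.mem_diff, Finset.mem_coe, YoungDiagram.mem_cells,
          Set.mem_singleton_iff]
        exact ⟨hc, by simp⟩
      have h2 := hl (a := (i + 1, j)) (b := (i, j)) (Prod.mk_le_mk.mpr ⟨Nat.le_succ i, le_refl j⟩) h1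
      simp at h2
    · intro hc
      have h1 : (i, j + 1) ∈ (↑(μ.cells.erase (i, j)) : Set (ℕ × ℕ)) := by
        simp only [Finset.coe_erase, Set.mem_diff, Finset.mem_coe, YoungDiagram.mem_cells,
          Set.mem_singleton_iff]
        exact ⟨hc, by simp⟩
      have h2 := hl (a := (i, j + 1)) (b := (i, j)) (Prod.mk_le_mk.mpr ⟨le_refl i, Nat.le_succ j⟩) h1
      simp at h2
  · rintro ⟨hm, h1, h2⟩
    refine ⟨hm, ?_⟩
    intro x y hyx hx
    obtain ⟨x1, x2⟩ := x
    obtain ⟨y1, y2⟩ := y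
    simp only [Finset.coe_erase, Set.mem_diff, Finset.mem_coe, YoungDiagram.mem_cells,
      Set.mem_singleton_iff] at hx ⊢
    obtain ⟨hxμ, hxne⟩ := hx
    refine ⟨μ.up_left_mem hyx.1 hyx.2 hxμ, ?_⟩
    intro hyij
    have hy1 : y1 = i := congrArg Prod.fst hyij
    have hy2 : y2 = j := congrArg Prod.snd hyij
    subst hy1; subst hy2
    rcases Nat.lt_or_ge y1 x1 with h | h
    · exact h1 (μ.up_left_mem h hyx.2 hxμ)
    · rcases Nat.lt_or_ge y2 x2 with h' | h'
      · exact h2 (μ.up_left_mem hyx.1 h' hxμ)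
      · exact hxne (Prod.ext (by have := hyx.1; omega) (by have := hyx.2; omega))

lemma addable_iff (μ : YoungDiagram) (i j : ℕ) :
    IsAddable μ (i, j) ↔ (i, j) ∉ μ ∧ (∀ i', i = i' + 1 → (i', j) ∈ μ) ∧
      (∀ j', j = j' + 1 → (i, j') ∈ μ) := by
  constructor
  · rintro ⟨hm, hl⟩
    refine ⟨hm, ?_, ?_⟩
    · rintro i' rfl
      have h1 : ((i' + 1, j) : ℕ × ℕ) ∈ (↑(insert ((i'+1, j) : ℕ × ℕ) μ.cells) : Set (ℕ × ℕ)) := by simp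
      have h2 := hl (a := (i' + 1, j)) (b := (i', j)) (Prod.mk_le_mk.mpr ⟨Nat.le_succ i', le_refl j⟩) h1
      simp only [Finset.coe_insert, Set.mem_insert_iff, Finset.mem_coe, YoungDiagram.mem_cells] at h2
      rcases h2 with h2 | h2
      · exact absurd h2 (by simp)
      · exact h2
    · rintro j' rfl
      have h1 : ((i, j' + 1) : ℕ × ℕ) ∈ (↑(insert ((i, j'+1) : ℕ × ℕ) μ.cells) : Set (ℕ × ℕ)) := by simp
      have h2 := hl (a := (i, j' + 1)) (b := (i, j')) (Prod.mk_le_mk.mpr ⟨le_refl i, Nat.le_succ j'⟩) h1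
      simp only [Finset.coe_insert, Set.mem_insert_iff, Finset.mem_coe, YoungDiagram.mem_cells] at h2
      rcases h2 with h2 | h2
      · exact absurd h2 (by simp)
      · exact h2
  · rintro ⟨hm, h1, h2⟩
    refine ⟨hm, ?_⟩
    intro x y hyx hx
    obtain ⟨x1, x2⟩ := x
    obtain ⟨y1, y2⟩ := y
    simp only [Finset.coe_insert, Set.mem_insert_iff, Finset.mem_coe,
      YoungDiagram.mem_cells] at hx ⊢
    rcases hx with hxe | hxμ
    · have hx1 : x1 = i := congrArg Prod.fst hxe
      have hx2 : x2 = j := congrArg Prod.snd hxe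
      subst hx1; subst hx2
      by_cases hy : (y1, y2) = ((x1, x2) : ℕ × ℕ)
      · exact Or.inl hy
      · right
        have hy1 : y1 ≤ x1 := hyx.1
        have hy2 : y2 ≤ x2 := hyx.2
        rcases Nat.lt_or_ge y1 x1 with h | h
        · obtain ⟨i', hi'⟩ : ∃ i', x1 = i' + 1 := ⟨x1 - 1, by omega⟩
          exact μ.up_left_mem (by omega) hy2 (h1 i' hi')
        · rcases Nat.lt_or_ge y2 x2 with h' | h'
          · obtain ⟨j', hj'⟩ : ∃ j', x2 = j' + 1 := ⟨x2 - 1, by omega⟩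
            exact μ.up_left_mem hy1 (by omega) (h2 j' hj')
          · exact absurd (Prod.ext (by omega) (by omega)) hy
    · exact Or.inr (μ.up_left_mem hyx.1 hyx.2 hxμ)

lemma addable_succ_succ (μ : YoungDiagram) (i j : ℕ) :
    IsAddable μ (i + 1, j + 1) ↔ (i + 1, j + 1) ∉ μ ∧ (i, j + 1) ∈ μ ∧ (i + 1, j) ∈ μ := by
  rw [addable_iff]
  constructor
  · rintro ⟨h, h1, h2⟩; exact ⟨h, h1 i rfl, h2 j rfl⟩
  · rintro ⟨h, h1, h2⟩
    refine ⟨h, ?_, ?_⟩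
    · rintro i' hi'
      obtain rfl : i = i' := by omega
      exact h1
    · rintro j' hj'
      obtain rfl : j = j' := by omega
      exact h2

lemma addable_zero_succ (μ : YoungDiagram) (j : ℕ) :
    IsAddable μ (0, j + 1) ↔ (0, j + 1) ∉ μ ∧ (0, j) ∈ μ := by
  rw [addable_iff]
  constructor
  · rintro ⟨h, _, h2⟩; exact ⟨h, h2 j rfl⟩
  · rintro ⟨h, h2⟩
    refine ⟨h, by omega, ?_⟩
    rintro j' hj'
    obtain rfl : j = j' := by omega
    exact h2

lemma addable_succ_zero (μ : YoungDiagram) (i : ℕ) :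
    IsAddable μ (i + 1, 0) ↔ (i + 1, 0) ∉ μ ∧ (i, 0) ∈ μ := by
  rw [addable_iff]
  constructor
  · rintro ⟨h, h1, _⟩; exact ⟨h, h1 i rfl⟩
  · rintro ⟨h, h1⟩
    refine ⟨h, ?_, by omega⟩
    rintro i' hi'
    obtain rfl : i = i' := by omega
    exact h1

lemma addable_zero_zero (μ : YoungDiagram) :
    IsAddable μ (0, 0) ↔ (0, 0) ∉ μ := by
  rw [addable_iff]
  constructor
  · rintro ⟨h, _, _⟩; exact h
  · intro h; exact ⟨h, by omega, by omega⟩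

lemma inj11 : Function.Injective (fun c : ℕ × ℕ => ((c.1 + 1, c.2 + 1) : ℕ × ℕ)) := by
  intro a b h; simp only [Prod.ext_iff] at h ⊢; omega
lemma inj01 : Function.Injective (fun c : ℕ × ℕ => ((c.1, c.2 + 1) : ℕ × ℕ)) := by
  intro a b h; simp only [Prod.ext_iff] at h ⊢; omega
lemma inj10 : Function.Injective (fun c : ℕ × ℕ => ((c.1 + 1, c.2) : ℕ × ℕ)) := by
  intro a b h; simp only [Prod.ext_iff] at h ⊢; omega

lemma count_finset {α : Type*} [DecidableEq α] (s : Finset α) (a : α) :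
    s.val.count a = if a ∈ s then 1 else 0 := by
  split
  · exact Multiset.count_eq_one_of_mem s.nodup (by assumption)
  · exact Multiset.count_eq_zero_of_notMem (by assumption)

lemma count_map_eq {α β : Type*} [DecidableEq α] [DecidableEq β] (s : Finset α)
    (g : α → β) (hg : Function.Injective g) (a : α) :
    (s.val.map g).count (g a) = if a ∈ s then 1 else 0 := by
  rw [Multiset.count_map_eq_count' g _ hg, count_finset]

lemma count_map_zero {α β : Type*} [DecidableEq β] (s : Finset α)
    (g : α → β) (p : β) (h : ∀ a, g a ≠ p) :
    (s.val.map g).count p = 0 := by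
  rw [Multiset.count_eq_zero]
  intro hp
  obtain ⟨a, _, ha⟩ := Multiset.mem_map.mp hp
  exact h a ha

lemma count11 (s : Finset (ℕ × ℕ)) (i j : ℕ) :
    (s.val.map (fun c : ℕ × ℕ => ((c.1 + 1, c.2 + 1) : ℕ × ℕ))).count (i + 1, j + 1) =
      if (i, j) ∈ s then 1 else 0 := by
  simpa using count_map_eq s _ inj11 (i, j)

lemma count01 (s : Finset (ℕ × ℕ)) (i j : ℕ) :
    (s.val.map (fun c : ℕ × ℕ => ((c.1, c.2 + 1) : ℕ × ℕ))).count (i, j + 1) =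
      if (i, j) ∈ s then 1 else 0 := by
  simpa using count_map_eq s _ inj01 (i, j)

lemma count10 (s : Finset (ℕ × ℕ)) (i j : ℕ) :
    (s.val.map (fun c : ℕ × ℕ => ((c.1 + 1, c.2) : ℕ × ℕ))).count (i + 1, j) =
      if (i, j) ∈ s then 1 else 0 := by
  simpa using count_map_eq s _ inj10 (i, j)

theorem key (μ : YoungDiagram) (Rem Add : Finset (ℕ × ℕ))
    (hRem : ∀ x, x ∈ Rem ↔ IsRemovable μ x)
    (hAdd : ∀ x, x ∈ Add ↔ IsAddable μ x) :
    Add.val + μ.cells.val + μ.cells.val.map (fun c => (c.1 + 1, c.2 + 1)) =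
      ({((0 : ℕ), (0 : ℕ))} : Multiset (ℕ × ℕ)) +
        Rem.val.map (fun c => (c.1 + 1, c.2 + 1)) +
        μ.cells.val.map (fun c => (c.1, c.2 + 1)) +
        μ.cells.val.map (fun c => (c.1 + 1, c.2)) := by
  refine Multiset.ext.mpr fun p => ?_
  obtain ⟨i, j⟩ := p
  simp only [Multiset.count_add]
  have hmem : ∀ x : ℕ × ℕ, x ∈ μ.cells ↔ x ∈ μ := fun x => μ.mem_cells x
  have hz : ∀ s : Finset (ℕ × ℕ), ∀ j' : ℕ,
      (s.val.map (fun c : ℕ × ℕ => ((c.1 + 1, c.2 + 1) : ℕ × ℕ))).count (0, j') = 0 := by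
    intro s j'
    refine count_map_zero _ _ _ ?_
    intro a h
    simp only [Prod.mk.injEq] at h
    omega
  have hz' : ∀ s : Finset (ℕ × ℕ), ∀ i' : ℕ,
      (s.val.map (fun c : ℕ × ℕ => ((c.1 + 1, c.2 + 1) : ℕ × ℕ))).count (i', 0) = 0 := by
    intro s i'
    refine count_map_zero _ _ _ ?_
    intro a h
    simp only [Prod.mk.injEq] at h
    omega
  have hz01 : ∀ s : Finset (ℕ × ℕ), ∀ i' : ℕ,
      (s.val.map (fun c : ℕ × ℕ => ((c.1, c.2 + 1) : ℕ × ℕ))).count (i', 0) = 0 := by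
    intro s i'
    refine count_map_zero _ _ _ ?_
    intro a h
    simp only [Prod.mk.injEq] at h
    omega
  have hz10 : ∀ s : Finset (ℕ × ℕ), ∀ j' : ℕ,
      (s.val.map (fun c : ℕ × ℕ => ((c.1 + 1, c.2) : ℕ × ℕ))).count (0, j') = 0 := by
    intro s j'
    refine count_map_zero _ _ _ ?_
    intro a h
    simp only [Prod.mk.injEq] at h
    omega
  rcases i with _ | i <;> rcases j with _ | j
  · rw [hz, hz, hz01, hz10, count_finset, count_finset, Multiset.count_singleton, if_pos rfl]
    simp only [hAdd, addable_zero_zero, hmem]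
    by_cases h : ((0 : ℕ × ℕ)) ∈ μ <;> simp [h, Prod.mk_zero_zero]
  · rw [hz, hz, hz10, count01, count_finset, count_finset, Multiset.count_singleton]
    simp only [hAdd, addable_zero_succ, hmem]
    have hd : ((0, j + 1) : ℕ × ℕ) ∈ μ → ((0, j) : ℕ × ℕ) ∈ μ :=
      fun h => μ.up_left_mem le_rfl (by omega) h
    by_cases hA : ((0, j + 1) : ℕ × ℕ) ∈ μ <;> by_cases hC : ((0, j) : ℕ × ℕ) ∈ μ <;>
      first
        | exact absurd (hd hA) hC
        | simp [hA, hC]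
  · rw [hz', hz', hz01, count10, count_finset, count_finset, Multiset.count_singleton]
    simp only [hAdd, addable_succ_zero, hmem]
    have hd : ((i + 1, 0) : ℕ × ℕ) ∈ μ → ((i, 0) : ℕ × ℕ) ∈ μ :=
      fun h => μ.up_left_mem (by omega) le_rfl h
    by_cases hA : ((i + 1, 0) : ℕ × ℕ) ∈ μ <;> by_cases hC : ((i, 0) : ℕ × ℕ) ∈ μ <;>
      first
        | exact absurd (hd hA) hC
        | simp [hA, hC]
  · rw [count11, count11, count01, count10, count_finset, count_finset,
      Multiset.count_singleton]
    simp only [hAdd, hRem, addable_succ_succ, removable_iff, hmem]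
    have h1 : ((i + 1, j + 1) : ℕ × ℕ) ∈ μ → ((i, j + 1) : ℕ × ℕ) ∈ μ :=
      fun h => μ.up_left_mem (by omega) le_rfl h
    have h2 : ((i + 1, j + 1) : ℕ × ℕ) ∈ μ → ((i + 1, j) : ℕ × ℕ) ∈ μ :=
      fun h => μ.up_left_mem le_rfl (by omega) h
    have h3 : ((i, j + 1) : ℕ × ℕ) ∈ μ → ((i, j) : ℕ × ℕ) ∈ μ :=
      fun h => μ.up_left_mem le_rfl (by omega) h
    have h4 : ((i + 1, j) : ℕ × ℕ) ∈ μ → ((i, j) : ℕ × ℕ) ∈ μ :=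
      fun h => μ.up_left_mem (by omega) le_rfl h
    by_cases hA : ((i + 1, j + 1) : ℕ × ℕ) ∈ μ <;> by_cases hB : ((i, j + 1) : ℕ × ℕ) ∈ μ <;>
      by_cases hC : ((i + 1, j) : ℕ × ℕ) ∈ μ <;> by_cases hD : ((i, j) : ℕ × ℕ) ∈ μ <;>
      first
        | exact absurd (h1 hA) hB
        | exact absurd (h2 hA) hC
        | exact absurd (h3 hB) hD
        | exact absurd (h4 hC) hD
        | simp [hA, hB, hC, hD]

lemma key_erased (μ : YoungDiagram) (Rem Add : Finset (ℕ × ℕ))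
    (hRem : ∀ x, x ∈ Rem ↔ IsRemovable μ x)
    (hAdd : ∀ x, x ∈ Add ↔ IsAddable μ x)
    (r : ℕ × ℕ) (hr : r ∈ Rem)
    (ν : YoungDiagram) (hν : ν.cells = μ.cells.erase r) :
    Add.val + μ.cells.val + ν.cells.val.map (fun c => (c.1 + 1, c.2 + 1)) =
      ({((0 : ℕ), (0 : ℕ))} : Multiset (ℕ × ℕ)) +
        (Rem.erase r).val.map (fun c => (c.1 + 1, c.2 + 1)) +
        μ.cells.val.map (fun c => (c.1, c.2 + 1)) +
        μ.cells.val.map (fun c => (c.1 + 1, c.2)) := by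
  have hrem : IsRemovable μ r := (hRem r).mp hr
  obtain ⟨ri, rj⟩ := r
  rw [removable_iff] at hrem
  obtain ⟨hrμ, hr10, hr01⟩ := hrem
  have hνe : (μ.cells.val.map (fun c : ℕ × ℕ => ((c.1 + 1, c.2 + 1) : ℕ × ℕ))).erase
      (ri + 1, rj + 1) = ν.cells.val.map (fun c : ℕ × ℕ => ((c.1 + 1, c.2 + 1) : ℕ × ℕ)) := by
    rw [hν, Finset.erase_val]
    simpa using
      (Multiset.map_erase (fun c : ℕ × ℕ => ((c.1 + 1, c.2 + 1) : ℕ × ℕ)) inj11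
        (ri, rj) μ.cells.val).symm
  have hRe : (Rem.val.map (fun c : ℕ × ℕ => ((c.1 + 1, c.2 + 1) : ℕ × ℕ))).erase
      (ri + 1, rj + 1) = (Rem.erase (ri, rj)).val.map
        (fun c : ℕ × ℕ => ((c.1 + 1, c.2 + 1) : ℕ × ℕ)) := by
    rw [Finset.erase_val]
    simpa using
      (Multiset.map_erase (fun c : ℕ × ℕ => ((c.1 + 1, c.2 + 1) : ℕ × ℕ)) inj11
        (ri, rj) Rem.val).symm
  have hmemL : ((ri + 1, rj + 1) : ℕ × ℕ) ∈
      μ.cells.val.map (fun c : ℕ × ℕ => ((c.1 + 1, c.2 + 1) : ℕ × ℕ)) :=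
    Multiset.mem_map.mpr ⟨(ri, rj), by simpa using hrμ, rfl⟩
  have hmemR : ((ri + 1, rj + 1) : ℕ × ℕ) ∈
      Rem.val.map (fun c : ℕ × ℕ => ((c.1 + 1, c.2 + 1) : ℕ × ℕ)) :=
    Multiset.mem_map.mpr ⟨(ri, rj), by simpa using hr, rfl⟩
  have h01 : ((ri + 1, rj + 1) : ℕ × ℕ) ∉
      μ.cells.val.map (fun c : ℕ × ℕ => ((c.1, c.2 + 1) : ℕ × ℕ)) := by
    intro h
    obtain ⟨a, ha, hax⟩ := Multiset.mem_map.mp h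
    simp only [Prod.mk.injEq] at hax
    apply hr10
    have : a = ((ri + 1, rj) : ℕ × ℕ) := Prod.ext (by omega) (by omega)
    rw [← this]
    simpa using ha
  have h10 : ((ri + 1, rj + 1) : ℕ × ℕ) ∉
      μ.cells.val.map (fun c : ℕ × ℕ => ((c.1 + 1, c.2) : ℕ × ℕ)) := by
    intro h
    obtain ⟨a, ha, hax⟩ := Multiset.mem_map.mp h
    simp only [Prod.mk.injEq] at hax
    apply hr01
    have : a = ((ri, rj + 1) : ℕ × ℕ) := Prod.ext (by omega) (by omega)
    rw [← this]
    simpa using ha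
  have hkey := key μ Rem Add hRem hAdd
  have herase := congrArg (fun S : Multiset (ℕ × ℕ) => S.erase ((ri + 1, rj + 1) : ℕ × ℕ)) hkey
  rw [Multiset.erase_add_right_pos _ hmemL, hνe,
    Multiset.erase_add_left_neg _ h10, Multiset.erase_add_left_neg _ h01,
    Multiset.erase_add_right_pos _ hmemR, hRe] at herase
  exact herase

lemma w00 : w (0, 0) = 1 := by simp [w]
lemma w11 (c : ℕ × ℕ) : w (c.1 + 1, c.2 + 1) = q * t * w c := by
  simp only [w]; ring
lemma w01 (c : ℕ × ℕ) : w (c.1, c.2 + 1) = q * w c := by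
  simp only [w]; ring
lemma w10 (c : ℕ × ℕ) : w (c.1 + 1, c.2) = t * w c := by
  simp only [w]; ring

lemma P1 (μ : YoungDiagram) (Rem Add : Finset (ℕ × ℕ))
    (hRem : ∀ x, x ∈ Rem ↔ IsRemovable μ x)
    (hAdd : ∀ x, x ∈ Add ↔ IsAddable μ x)
    (r : ℕ × ℕ) (hr : r ∈ Rem)
    (ν : YoungDiagram) (hν : ν.cells = μ.cells.erase r) (z : K) :
    (∏ a ∈ Add, (1 - w a * z)) * (∏ c ∈ μ.cells, (1 - w c * z)) *
        (∏ c ∈ ν.cells, (1 - q * t * w c * z)) =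
      (1 - z) * (∏ r' ∈ Rem.erase r, (1 - q * t * w r' * z)) *
        (∏ c ∈ μ.cells, (1 - q * w c * z)) * (∏ c ∈ μ.cells, (1 - t * w c * z)) := by
  have hk := key_erased μ Rem Add hRem hAdd r hr ν hν
  have h := congrArg (fun S : Multiset (ℕ × ℕ) => (S.map (fun p => 1 - w p * z)).prod) hk
  simp only [Multiset.map_add, Multiset.prod_add, Multiset.map_map, Multiset.map_singleton,
    Multiset.prod_singleton, Function.comp] at h
  rw [← Finset.prod_eq_multiset_prod, ← Finset.prod_eq_multiset_prod,
    ← Finset.prod_eq_multiset_prod, ← Finset.prod_eq_multiset_prod,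
    ← Finset.prod_eq_multiset_prod, ← Finset.prod_eq_multiset_prod] at h
  simp only [w00, w11, w01, w10] at h
  rw [h]
  ring

set_option maxHeartbeats 1000000

/-- the corner-weight `e₁^⊥`-Pieri coefficient `c_R` rewritten as a product
over the cells of `ν = μ ∖ {corner of weight R}` (the form `Ω[(M/qt)·B_ν/R]`). -/
theorem stmt_9 (μ : YoungDiagram) (Rem Add : Finset (ℕ × ℕ))
    (hRem : ∀ x, x ∈ Rem ↔ IsRemovable μ x)
    (hAdd : ∀ x, x ∈ Add ↔ IsAddable μ x)
    (M : K) (hM : M = (1 - t) * (1 - q))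
    (r : ℕ × ℕ) (hr : r ∈ Rem)
    (ν : YoungDiagram) (hν : ν.cells = μ.cells.erase r)
    (cR : K)
    (hcR : cR = q * t * w r / M * (∏ a ∈ Add, (1 - w a / (q * t * w r))) /
      ∏ r' ∈ Rem.erase r, (1 - w r' / w r)) :
    cR = w r * ((1 - 1 / (q * t * w r)) / (1 - 1 / (q * t))) *
      ∏ s ∈ ν.cells,
        ((1 - w s / (q * w r)) * (1 - w s / (t * w r)) /
          ((1 - w s / w r) * (1 - w s / (q * t * w r)))) := by
  have hq := q_ne_zero
  have ht := t_ne_zero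
  have hR : w r ≠ 0 := w_ne_zero r
  have hqt : q * t ≠ 0 := mul_ne_zero hq ht
  have hqtR : q * t * w r ≠ 0 := mul_ne_zero hqt hR
  have htR : t * w r ≠ 0 := mul_ne_zero ht hR
  have hqR : q * w r ≠ 0 := mul_ne_zero hq hR
  have hq1 : q ≠ 1 := by
    intro h
    have : w (0, 1) = w (0, 0) := by simp [w, h]
    simpa [Prod.ext_iff] using w_inj this
  have ht1 : t ≠ 1 := by
    intro h
    have : w (1, 0) = w (0, 0) := by simp [w, h]
    simpa [Prod.ext_iff] using w_inj this
  have hqt1 : q * t ≠ 1 := by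
    intro h
    have : w (1, 1) = w (0, 0) := by
      simp only [w, pow_one, pow_zero, one_mul, mul_one]
      linear_combination h
    simpa [Prod.ext_iff] using w_inj this
  have h1qt : (1 : K) - 1 / (q * t) ≠ 0 := by
    intro h
    have h2 : (1 : K) = 1 / (q * t) := by linear_combination h
    rw [eq_div_iff hqt, one_mul] at h2
    exact hqt1 h2
  have hMne' : ((1 : K) - t) * (1 - q) ≠ 0 :=
    mul_ne_zero (sub_ne_zero.mpr (Ne.symm ht1)) (sub_ne_zero.mpr (Ne.symm hq1))
  have hMne : M ≠ 0 := by rw [hM]; exact hMne'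
  have fact_ne : ∀ x y : K, y ≠ 0 → x ≠ y → (1 : K) - x / y ≠ 0 := by
    intro x y hy hxy h
    apply hxy
    have h2 : (1 : K) = x / y := by linear_combination h
    rw [eq_div_iff hy, one_mul] at h2
    exact h2.symm
  -- removability facts for r
  have hrem : IsRemovable μ r := (hRem r).mp hr
  have hrμ : r ∈ μ := hrem.1
  have hrfacts := (removable_iff μ r.1 r.2).mp (by simpa using hrem)
  have hr10 : (r.1 + 1, r.2) ∉ μ := hrfacts.2.1
  have hr01 : (r.1, r.2 + 1) ∉ μ := hrfacts.2.2
  have hrcells : r ∈ μ.cells := (μ.mem_cells r).mpr hrμ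
  -- membership facts for ν cells
  have hνmem : ∀ c : ℕ × ℕ, c ∈ ν.cells → c ∈ μ ∧ c ≠ r := by
    intro c hc
    rw [hν, Finset.mem_erase] at hc
    exact ⟨(μ.mem_cells c).mp hc.2, hc.1⟩
  have hwc_R : ∀ c : ℕ × ℕ, c ∈ ν.cells → w c ≠ w r := by
    intro c hc h
    exact (hνmem c hc).2 (w_inj h)
  have hwc_qtR : ∀ c : ℕ × ℕ, c ∈ ν.cells → w c ≠ q * t * w r := by
    intro c hc h
    have h2 : w c = w (r.1 + 1, r.2 + 1) := by rw [w11]; simpa using h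
    have h3 := w_inj h2
    apply hr10
    have : (r.1 + 1, r.2 + 1) ∈ μ := h3 ▸ (hνmem c hc).1
    exact μ.up_left_mem le_rfl (by omega) this
  -- the three nonzero products
  have hDne : (∏ r' ∈ Rem.erase r, (1 - w r' / w r)) ≠ 0 := by
    rw [Finset.prod_ne_zero_iff]
    intro r' hr'
    exact fact_ne _ _ hR fun h => (Finset.mem_erase.mp hr').1 (w_inj h)
  have hQne : (∏ c ∈ ν.cells, (1 - w c / w r)) ≠ 0 := by
    rw [Finset.prod_ne_zero_iff]
    intro c hc
    exact fact_ne _ _ hR (hwc_R c hc)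
  have hPne : (∏ c ∈ ν.cells, (1 - w c / (q * t * w r))) ≠ 0 := by
    rw [Finset.prod_ne_zero_iff]
    intro c hc
    exact fact_ne _ _ hqtR (hwc_qtR c hc)
  -- the product identity specialized at z = (q t w r)⁻¹
  set z : K := (q * t * w r)⁻¹ with hz
  have hP := P1 μ Rem Add hRem hAdd r hr ν hν z
  rw [← Finset.mul_prod_erase μ.cells (fun c => 1 - w c * z) hrcells,
    ← Finset.mul_prod_erase μ.cells (fun c => 1 - q * w c * z) hrcells,
    ← Finset.mul_prod_erase μ.cells (fun c => 1 - t * w c * z) hrcells,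
    ← hν] at hP
  have E1 : ∀ p : ℕ × ℕ, 1 - w p * z = 1 - w p / (q * t * w r) := by
    intro p; rw [hz, div_eq_mul_inv]
  have E2 : ∀ p : ℕ × ℕ, 1 - q * t * w p * z = 1 - w p / w r := by
    intro p
    rw [hz]
    congr 1
    field_simp
  have E3 : ∀ p : ℕ × ℕ, 1 - q * w p * z = 1 - w p / (t * w r) := by
    intro p
    rw [hz]
    congr 1
    field_simp
  have E4 : ∀ p : ℕ × ℕ, 1 - t * w p * z = 1 - w p / (q * w r) := by
    intro p
    rw [hz]
    congr 1
    field_simp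
  have E5 : (1 : K) - z = 1 - 1 / (q * t * w r) := by
    rw [hz, one_div]
  rw [E5] at hP
  simp only [E1, E2, E3, E4] at hP
  have F1 : (1 : K) - w r / (q * t * w r) = 1 - 1 / (q * t) := by
    congr 1
    rw [div_eq_div_iff hqtR hqt]
    ring
  have F3 : (1 : K) - w r / (t * w r) = 1 - 1 / t := by
    congr 1
    rw [div_eq_div_iff htR ht]
    ring
  have F4 : (1 : K) - w r / (q * w r) = 1 - 1 / q := by
    congr 1
    rw [div_eq_div_iff hqR hq]
    ring
  rw [F1, F3, F4] at hP
  -- abbreviate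
  set R := w r with hR'
  set A := ∏ a ∈ Add, (1 - w a / (q * t * R)) with hA'
  set D := ∏ r' ∈ Rem.erase r, (1 - w r' / R) with hD'
  set P := ∏ c ∈ ν.cells, (1 - w c / (q * t * R)) with hP'
  set Q := ∏ c ∈ ν.cells, (1 - w c / R) with hQ'
  set T := ∏ c ∈ ν.cells, (1 - w c / (t * R)) with hT'
  set S := ∏ c ∈ ν.cells, (1 - w c / (q * R)) with hS'
  set G1 : K := 1 - 1 / (q * t) with hG1'
  set G2 : K := 1 - 1 / (q * t * R) with hG2'
  set G3 : K := 1 - 1 / t with hG3'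
  set G4 : K := 1 - 1 / q with hG4'
  have hG3 : t * G3 = t - 1 := by
    rw [hG3', mul_sub, mul_one, mul_one_div_cancel ht]
  have hG4 : q * G4 = q - 1 := by
    rw [hG4', mul_sub, mul_one, mul_one_div_cancel hq]
  rw [hcR, hM]
  rw [show (∏ s ∈ ν.cells,
        ((1 - w s / (q * R)) * (1 - w s / (t * R)) /
          ((1 - w s / R) * (1 - w s / (q * t * R))))) =
      ((∏ s ∈ ν.cells, (1 - w s / (q * R))) * (∏ s ∈ ν.cells, (1 - w s / (t * R)))) /
        ((∏ s ∈ ν.cells, (1 - w s / R)) * (∏ s ∈ ν.cells, (1 - w s / (q * t * R)))) by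
    rw [Finset.prod_div_distrib, Finset.prod_mul_distrib, Finset.prod_mul_distrib]]
  rw [← hS', ← hT', ← hQ', ← hP']
  rw [show q * t * R / ((1 - t) * (1 - q)) * A / D =
      (q * t * R * A) / (((1 - t) * (1 - q)) * D) by
    rw [div_mul_eq_mul_div, div_div]]
  rw [show R * (G2 / G1) * (S * T / (Q * P)) =
      (R * G2 * (S * T)) / (G1 * (Q * P)) by
    rw [mul_div_assoc' R G2 G1, div_mul_div_comm]]
  rw [div_eq_div_iff (mul_ne_zero hMne' hDne) (mul_ne_zero h1qt (mul_ne_zero hQne hPne))]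
  linear_combination (q * t * R) * hP + R * G2 * D * T * S * (t * G3 * hG4 + (q - 1) * hG3)
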